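/- arXiv:1311.0809 — 17 statements merged into one kernel-verified Lean document; each statement's English description precedes it below -/
import Mathlib

section
/- Let a 3-stage stiffly accurate diagonally implicit SRK tableau with real parameter λ satisfy the strong order-1.0 conditions (3), (5), (7), (10) and (11). Then λ = 0 or λ = 1. -/
/-- For a 3-stage stiffly accurate diagonally implicit SRK tableau, the strong
order-1.0 conditions (3), (5), (7), (10) and (11) force the parameter λ to be
0 or 1. The nonzero entries of the strictly lower triangular matrices `B1`, `B2`
and of the lower triangular matrices `A`, `B3` appear as real variables; all
other entries vanish by the diagonally implicit shape of the tableau. -/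
theorem srk_lambda_zero_or_one
    (A11 A21 A22 A31 A32 A33 : ℝ)
    (B1_21 B1_31 B1_32 : ℝ)
    (B2_21 B2_31 B2_32 : ℝ)
    (B3_11 B3_21 B3_22 B3_31 B3_32 B3_33 : ℝ)
    (lam : ℝ)
    (h3 : B2_31 + B2_32 = 0)
    (h5 : B1_32 * B1_21 = lam / 2)
    (h7 : B2_31 * B3_11 + B2_32 * (B3_21 + B3_22) + B3_32 * B2_21 = 1 - lam)
    (h10 : B2_32 * B2_21 = 0)
    (h11 : B1_32 * B2_21 + B2_32 * B1_21 = 0) :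
    lam = 0 ∨ lam = 1 := by
  rcases mul_eq_zero.mp h10 with hb | hb
  · subst_vars
    have h31 : B2_31 = 0 := by linarith
    rcases mul_eq_zero.mp (by linarith [h11] : B1_32 * B2_21 = 0) with h | h
    · left; simp [h] at h5; linarith
    · right; rw [h31, h] at h7; simp at h7; linarith
  · subst_vars
    rcases mul_eq_zero.mp (by linarith [h11] : B2_32 * B1_21 = 0) with h | h
    · right
      have h31 : B2_31 = 0 := by linarith
      rw [h31, h] at h7; simp at h7; linarith
    · left; simp [h] at h5; linarith
end

section
/- Let a 3-stage stiffly accurate diagonally implicit SRK tableau with real parameter λ satisfy the strong order-1.0 conditions (3), (5), (7), (10) and (11). Then λ = 1 if and only if B2 = 0 (i.e. B2_21 = B2_31 = B2_32 = 0). -/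
/-- For a 3-stage stiffly accurate diagonally implicit SRK tableau satisfying
the strong order-1.0 conditions (3), (5), (7), (10) and (11), one has λ = 1
if and only if the matrix B2 vanishes, i.e. B2_21 = B2_31 = B2_32 = 0
(all other entries of B2 are zero by the shape of the tableau). -/
theorem srk_lambda_eq_one_iff_B2_eq_zero
    (A11 A21 A22 A31 A32 A33 : ℝ)
    (B1_21 B1_31 B1_32 : ℝ)
    (B2_21 B2_31 B2_32 : ℝ)
    (B3_11 B3_21 B3_22 B3_31 B3_32 B3_33 : ℝ)
    (lam : ℝ)
    (h3 : B2_31 + B2_32 = 0)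
    (h5 : B1_32 * B1_21 = lam / 2)
    (h7 : B2_31 * B3_11 + B2_32 * (B3_21 + B3_22) + B3_32 * B2_21 = 1 - lam)
    (h10 : B2_32 * B2_21 = 0)
    (h11 : B1_32 * B2_21 + B2_32 * B1_21 = 0) :
    lam = 1 ↔ (B2_21 = 0 ∧ B2_31 = 0 ∧ B2_32 = 0) := by
  constructor
  · intro hlam
    subst hlam
    have h5' : B1_32 * B1_21 = 1 / 2 := by linarith
    have hB132 : B1_32 ≠ 0 := by
      intro h; rw [h] at h5'; norm_num at h5'
    have hB121 : B1_21 ≠ 0 := by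
      intro h; rw [h] at h5'; norm_num at h5'
    rcases mul_eq_zero.mp h10 with h | h
    · have h21 : B2_21 = 0 := by
        have := h11
        rw [h] at this
        have : B1_32 * B2_21 = 0 := by linarith
        exact (mul_eq_zero.mp this).resolve_left hB132
      exact ⟨h21, by linarith, h⟩
    · have h32 : B2_32 = 0 := by
        have := h11
        rw [h] at this
        have : B2_32 * B1_21 = 0 := by linarith
        exact (mul_eq_zero.mp this).resolve_right hB121
      exact ⟨h, by linarith, h32⟩
  · rintro ⟨h1, h2, h3'⟩
    rw [h1, h2, h3'] at h7
    linarith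
end

section
/- There exist no real numbers A_11, A_21, A_22, B1_21, B2_21, B3_11, B3_21, B3_22 and λ ∈ ℝ such that the 2-stage instances of the strong order-1.0 conditions (3), (5) and (7) hold simultaneously; that is, the system B2_21 = 0, 0 = λ/2, and B2_21·B3_11 + B3_22·B2_21 = 1 − λ has no solution. Consequently, at least 3 stages are needed for a stiffly accurate diagonally implicit SRK method of strong order 1.0. -/
/-- There is no 2-stage stiffly accurate diagonally implicit SRK tableau
satisfying the strong order-1.0 conditions (3), (5) and (7): the system
B2_21 = 0, 0 = λ/2 and B2_21·B3_11 + B3_22·B2_21 = 1 - λ is unsolvable.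
Hence at least 3 stages are needed for strong order 1.0. -/
theorem no_two_stage_strong_order_one :
    ¬ ∃ (A11 A21 A22 B1_21 B2_21 B3_11 B3_21 B3_22 lam : ℝ),
        B2_21 = 0 ∧
        (0 : ℝ) = lam / 2 ∧
        B2_21 * B3_11 + B3_22 * B2_21 = 1 - lam := by
  rintro ⟨_, _, _, _, B2_21, B3_11, _, B3_22, lam, h1, h2, h3⟩
  subst h1
  have : lam = 0 := by linarith
  subst this
  simp at h3
end

section
/- (Class I, λ=1.) For all real A_11, A_22, A_33, B3_22f and all real B3_32f ≠ 0, the 3-stage tableau with A_21 = (A_11 − 4·A_22·(B3_32f)² + 4·(B3_32f)² − 1)/(4·(B3_32f)²), A_31 = 1 − A_33, A_32 = 0, B1_21 = 1, B1_31 = 1/2, B1_32 = 1/2, B2 = 0, B3_11 = 0, B3_21 = −(1 + 2·B3_22f·B3_32f)/(2·B3_32f), B3_22 = B3_22f, B3_31 = −1/(4·B3_32f), B3_32 = B3_32f, B3_33 = −(4·(B3_32f)² − 1)/(4·B3_32f) satisfies all strong order-1.0 conditions (1)–(14) with λ = 1. -/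
open Matrix

/-- Euclidean dot product on ℝ³. -/
def dot3 (u v : Fin 3 → ℝ) : ℝ := ∑ i, u i * v i

/-- The strong order-1.0 conditions (1)–(14) for a 3-stage stiffly accurate
diagonally implicit SRK tableau (A, B1, B2, B3) with parameter λ.  Conditions
(1)–(12) are written in the simplified scalar form valid for such tableaux
(A, B3 lower triangular, B1, B2 strictly lower triangular); conditions (13)
and (14) are written with e = (1,1,1), βk the last row of Bk, componentwise
products of vectors, and matrix–vector products. -/
def SRKOrder1Conds (A B1 B2 B3 : Matrix (Fin 3) (Fin 3) ℝ) (lam : ℝ) : Prop :=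
  let e : Fin 3 → ℝ := ![1, 1, 1]
  let β1 : Fin 3 → ℝ := fun j => B1 2 j
  let β2 : Fin 3 → ℝ := fun j => B2 2 j
  let β3 : Fin 3 → ℝ := fun j => B3 2 j
  let B1e := B1.mulVec e
  let B2e := B2.mulVec e
  let B3e := B3.mulVec e
  -- (1)
  A 2 0 + A 2 1 + A 2 2 = 1 ∧
  -- (2)
  B1 2 0 + B1 2 1 = 1 ∧
  -- (3)
  B2 2 0 + B2 2 1 = 0 ∧
  -- (4)
  B3 2 0 + B3 2 1 + B3 2 2 = 0 ∧
  -- (5)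
  B1 2 1 * B1 1 0 = lam / 2 ∧
  -- (6)
  B3 2 0 * B3 0 0 + B3 2 1 * (B3 1 0 + B3 1 1) = -lam / 2 ∧
  -- (7)
  B2 2 0 * B3 0 0 + B2 2 1 * (B3 1 0 + B3 1 1) + B3 2 1 * B2 1 0 = 1 - lam ∧
  -- (8)
  A 2 0 * B3 0 0 + A 2 1 * (B3 1 0 + B3 1 1) = 0 ∧
  -- (9)
  B1 2 0 * B3 0 0 + B1 2 1 * (B3 1 0 + B3 1 1) + B3 2 1 * B1 1 0 + B3 2 2 = 0 ∧
  -- (10)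
  B2 2 1 * B2 1 0 = 0 ∧
  -- (11)
  B1 2 1 * B2 1 0 + B2 2 1 * B1 1 0 = 0 ∧
  -- (12)
  B3 2 0 * A 0 0 + B3 2 1 * (A 1 0 + A 1 1) + B3 2 2 = 0 ∧
  -- (13)
  (2 * dot3 β1 (fun i => B1e i * B2e i) + 2 * dot3 β1 (fun i => B1e i * B3e i)
    + dot3 β2 (fun i => B1e i * B1e i) + dot3 β2 (fun i => B2e i * B2e i)
    + dot3 β2 (fun i => B2e i * B3e i) + dot3 β3 (fun i => B1e i * B1e i)
    + (1/2) * dot3 β3 (fun i => B2e i * B2e i)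
    + dot3 β3 (fun i => B3e i * B3e i) = 0) ∧
  -- (14)
  (dot3 β1 (B1.mulVec B2e) + dot3 β1 (B2.mulVec B1e) + dot3 β1 (B1.mulVec B3e)
    + dot3 β1 (B3.mulVec B1e) + dot3 β2 (B1.mulVec B1e) + dot3 β2 (B2.mulVec B2e)
    + (1/2) * dot3 β2 (B2.mulVec B3e) + (1/2) * dot3 β2 (B3.mulVec B2e)
    + dot3 β3 (B1.mulVec B1e) + (1/2) * dot3 β3 (B2.mulVec B2e)
    + dot3 β3 (B3.mulVec B3e) = 0)

/-- (Class I, λ = 1.) The Class I family of coefficients satisfies all strong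
order-1.0 conditions (1)–(14) with λ = 1. -/
theorem srk_class_I (A11 A22 A33 B3_22f B3_32f : ℝ) (hb : B3_32f ≠ 0) :
    SRKOrder1Conds
      !![A11, 0, 0;
         (A11 - 4*A22*B3_32f^2 + 4*B3_32f^2 - 1)/(4*B3_32f^2), A22, 0;
         1 - A33, 0, A33]
      !![0, 0, 0; 1, 0, 0; 1/2, 1/2, 0]
      (0 : Matrix (Fin 3) (Fin 3) ℝ)
      !![0, 0, 0;
         -(1 + 2*B3_22f*B3_32f)/(2*B3_32f), B3_22f, 0;
         -1/(4*B3_32f), B3_32f, -(4*B3_32f^2 - 1)/(4*B3_32f)]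
      1 := by
  unfold SRKOrder1Conds dot3
  simp only [Matrix.mulVec, dotProduct, Fin.sum_univ_three,
    Matrix.cons_val', Matrix.cons_val_zero, Matrix.cons_val_one, Matrix.head_cons,
    Matrix.empty_val', Matrix.cons_val_fin_one, Matrix.head_fin_const,
    Matrix.cons_val_two, Matrix.tail_cons, Matrix.of_apply, Matrix.zero_apply]
  norm_num
  repeat' apply And.intro
  all_goals field_simp
  all_goals ring
end

section
/- (Class II, λ=1.) For all real A_11, A_22, A_33, B3_22f, all real B3_32f ≠ 0, and each sign σ ∈ {+1,−1}, the 3-stage tableau with A_21 = A_11 − A_22, A_31 = 1 − A_33, A_32 = 0, B1_21 = σ/(2·B3_32f), B1_31 = 1 − σ·B3_32f, B1_32 = σ·B3_32f, B2 = 0, B3_11 = 0, B3_21 = −(1 + 2·B3_22f·B3_32f)/(2·B3_32f), B3_22 = B3_22f, B3_31 = −B3_32f, B3_32 = B3_32f, B3_33 = 0 satisfies all strong order-1.0 conditions (1)–(14) with λ = 1. -/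
open Matrix

set_option maxHeartbeats 2000000 in
/-- (Class II, λ = 1.) The Class II family of coefficients, with sign σ ∈ {+1, −1},
satisfies all strong order-1.0 conditions (1)–(14) with λ = 1. -/
theorem srk_class_II (A11 A22 A33 B3_22f B3_32f σ : ℝ) (hb : B3_32f ≠ 0)
    (hσ : σ = 1 ∨ σ = -1) :
    SRKOrder1Conds
      !![A11, 0, 0;
         A11 - A22, A22, 0;
         1 - A33, 0, A33]
      !![0, 0, 0;
         σ/(2*B3_32f), 0, 0;
         1 - σ*B3_32f, σ*B3_32f, 0]
      (0 : Matrix (Fin 3) (Fin 3) ℝ)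
      !![0, 0, 0;
         -(1 + 2*B3_22f*B3_32f)/(2*B3_32f), B3_22f, 0;
         -B3_32f, B3_32f, 0]
      1 := by
  have hσ2 : σ^2 = 1 := by rcases hσ with h | h <;> rw [h] <;> ring
  unfold SRKOrder1Conds dot3
  simp only [Matrix.mulVec, dotProduct, Fin.sum_univ_three, Matrix.cons_val',
    Matrix.cons_val_zero, Matrix.cons_val_one, Matrix.head_cons, Matrix.empty_val',
    Matrix.cons_val_fin_one, Matrix.head_fin_const, Matrix.cons_val_two, Matrix.tail_cons,
    Matrix.zero_apply, Matrix.of_apply]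
  refine ⟨by ring, by ring, by ring, by ring, ?_, ?_, by ring, by ring, ?_, by ring, by ring, by ring, ?_, ?_⟩ <;>
    rcases hσ with h | h <;> subst h <;> field_simp <;> ring
end

section
/- (Class III, λ=1.) For all real A_21, A_22, A_32 and all real B3_11f ≠ 0, writing c = B3_11f, the 3-stage tableau with A_11 = 1, A_31 = −A_32·(c² − 1)/(2c²), A_33 = −(A_32·c² − 2c² + A_32)/(2c²), B1_21 = (c² + 1)/(2·(1 + 2c²)), B1_31 = −c²/(c² + 1), B1_32 = (1 + 2c²)/(c² + 1), B2 = 0, B3_11 = c, B3_21 = (c² − 1)/(2c), B3_22 = 0, B3_31 = −1/(2c), B3_32 = 0, B3_33 = 1/(2c) satisfies all strong order-1.0 conditions (1)–(14) with λ = 1. -/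
open Matrix

set_option maxHeartbeats 2000000 in
/-- (Class III, λ = 1.) The Class III family of coefficients, with
c = B3_11f ≠ 0, satisfies all strong order-1.0 conditions (1)–(14) with λ = 1. -/
theorem srk_class_III (A21 A22 A32 B3_11f : ℝ) (hc : B3_11f ≠ 0) :
    SRKOrder1Conds
      !![1, 0, 0;
         A21, A22, 0;
         -A32*(B3_11f^2 - 1)/(2*B3_11f^2), A32,
           -(A32*B3_11f^2 - 2*B3_11f^2 + A32)/(2*B3_11f^2)]
      !![0, 0, 0;
         (B3_11f^2 + 1)/(2*(1 + 2*B3_11f^2)), 0, 0;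
         -B3_11f^2/(B3_11f^2 + 1), (1 + 2*B3_11f^2)/(B3_11f^2 + 1), 0]
      (0 : Matrix (Fin 3) (Fin 3) ℝ)
      !![B3_11f, 0, 0;
         (B3_11f^2 - 1)/(2*B3_11f), 0, 0;
         -1/(2*B3_11f), 0, 1/(2*B3_11f)]
      1 := by
  have h1 : B3_11f^2 + 1 ≠ 0 := by positivity
  have h2 : (1:ℝ) + 2*B3_11f^2 ≠ 0 := by positivity
  have h3 : (2:ℝ)*B3_11f^2 ≠ 0 := by positivity
  unfold SRKOrder1Conds dot3
  refine ⟨?_, ?_, ?_, ?_, ?_, ?_, ?_, ?_, ?_, ?_, ?_, ?_, ?_, ?_⟩ <;>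
    norm_num [Matrix.mulVec, dotProduct, Fin.sum_univ_three,
      Matrix.vecHead, Matrix.vecTail, Matrix.cons_val_two, Matrix.cons_val_succ,
      Matrix.cons_val_zero] <;>
    field_simp <;> ring
end

section
/- (Class IV, λ=1.) For all real A_11, A_22, A_32, all real B3_33f ≠ 0, and each sign σ ∈ {+1,−1}, writing c = B3_33f and s = √(1 + 2c²), the 3-stage tableau with A_21 = (2c² − 2·A_22·c² + 2 − A_22 − A_11)/(1 + 2c²), A_31 = A_32/c², A_33 = (c² − c²·A_32 − A_32)/c², B1_21 = σ·(1 + c²)/(c·s), B1_31 = −(1/2)·(σ·c·s − 2 − 2c²)/(1 + c²), B1_32 = σ·(1/2)·c·s/(1 + c²), B2 = 0, B3_11 = −c, B3_21 = 1/c, B3_22 = 0, B3_31 = −(1/2)·c/(1 + c²), B3_32 = −(1/2)·c·(1 + 2c²)/(1 + c²), B3_33 = c satisfies all strong order-1.0 conditions (1)–(14) with λ = 1. -/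
set_option maxHeartbeats 2000000


open Matrix

/-- (Class IV, λ = 1.) The Class IV family of coefficients, with
c = B3_33f ≠ 0, s = √(1 + 2c²) and sign σ ∈ {+1, −1}, satisfies all strong
order-1.0 conditions (1)–(14) with λ = 1. -/
theorem srk_class_IV (A11 A22 A32 B3_33f σ : ℝ) (hc : B3_33f ≠ 0)
    (hσ : σ = 1 ∨ σ = -1) :
    SRKOrder1Conds
      !![A11, 0, 0;
         (2*B3_33f^2 - 2*A22*B3_33f^2 + 2 - A22 - A11)/(1 + 2*B3_33f^2), A22, 0;
         A32/B3_33f^2, A32, (B3_33f^2 - B3_33f^2*A32 - A32)/B3_33f^2]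
      !![0, 0, 0;
         σ*(1 + B3_33f^2)/(B3_33f * Real.sqrt (1 + 2*B3_33f^2)), 0, 0;
         -(1/2)*(σ*B3_33f*Real.sqrt (1 + 2*B3_33f^2) - 2 - 2*B3_33f^2)/(1 + B3_33f^2),
           σ*(1/2)*B3_33f*Real.sqrt (1 + 2*B3_33f^2)/(1 + B3_33f^2), 0]
      (0 : Matrix (Fin 3) (Fin 3) ℝ)
      !![-B3_33f, 0, 0;
         1/B3_33f, 0, 0;
         -(1/2)*B3_33f/(1 + B3_33f^2), -(1/2)*B3_33f*(1 + 2*B3_33f^2)/(1 + B3_33f^2),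
           B3_33f]
      1 := by
  set c := B3_33f with hcdef
  set s := Real.sqrt (1 + 2*c^2) with hsdef
  have h2 : (0:ℝ) < 1 + 2*c^2 := by positivity
  have hs2 : s^2 = 1 + 2*c^2 := Real.sq_sqrt h2.le
  have hs0 : s ≠ 0 := by
    intro h; rw [h] at hs2; simp at hs2; nlinarith
  have hσ2 : σ^2 = 1 := by rcases hσ with h|h <;> rw [h] <;> ring
  have hσ0 : σ ≠ 0 := by intro h; rw [h] at hσ2; simp at hσ2
  have h1c : (1:ℝ) + c^2 ≠ 0 := by positivity
  have h12c : (1:ℝ) + 2*c^2 ≠ 0 := h2.ne'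
  simp only [SRKOrder1Conds, dot3, Matrix.mulVec, dotProduct, Fin.sum_univ_three,
    Matrix.cons_val', Matrix.cons_val_zero, Matrix.cons_val_one, Matrix.head_cons,
    Matrix.empty_val', Matrix.cons_val_fin_one, Matrix.head_fin_const,
    Matrix.cons_val_two, Matrix.tail_cons, Matrix.of_apply, Matrix.zero_apply]
  refine ⟨?_, ?_, ?_, ?_, ?_, ?_, ?_, ?_, ?_, ?_, ?_, ?_, ?_, ?_⟩
  case refine_5 =>
    field_simp; ring_nf
    linear_combination hσ2
  case refine_9 =>
    field_simp; ring_nf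
    linear_combination (σ*(1+c^2)) * hs2
  case refine_13 =>
    field_simp; ring_nf
    linear_combination ((-2)*c + (4)*c*s^2 + (-10)*c^3 + (8)*c^3*s^2 + (-18)*c^5 + (4)*c^5*s^2 + (-14)*c^7 + (-4)*c^9) * hσ2 + ((2)*c + (6)*c^3 + (6)*c^5 + (2)*c^7) * hs2
  all_goals (field_simp <;> ring)
end

section
/- (Class VII, λ=0.) For all real A_11, A_22, A_32, A_33, B3_22f, all real B1_21f with 0 < B1_21f < 1, and each sign σ ∈ {+1,−1}, writing q = √(2·B1_21f − 2·(B1_21f)²), the 3-stage tableau with A_21 = A_11 − A_11·B1_21f − A_22 + B1_21f, A_31 = 1 − A_32 − A_33, B1_21 = B1_21f, B1_31 = 1, B1_32 = 0, B2_21 = σ·q, B2_31 = 0, B2_32 = 0, B3_11 = 0, B3_21 = −B3_22f, B3_22 = B3_22f, B3_31 = −σ·(1 − B1_21f)/q, B3_32 = σ/q, B3_33 = −σ·B1_21f/q satisfies all strong order-1.0 conditions (1)–(14) with λ = 0. -/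
open Matrix

/-- (Class VII, λ = 0.) The Class VII family of coefficients, with
0 < B1_21f < 1, q = √(2·B1_21f − 2·B1_21f²) and sign σ ∈ {+1, −1}, satisfies
all strong order-1.0 conditions (1)–(14) with λ = 0. -/
theorem srk_class_VII (A11 A22 A32 A33 B3_22f B1_21f σ : ℝ)
    (h0 : 0 < B1_21f) (h1 : B1_21f < 1) (hσ : σ = 1 ∨ σ = -1) :
    SRKOrder1Conds
      !![A11, 0, 0;
         A11 - A11*B1_21f - A22 + B1_21f, A22, 0;
         1 - A32 - A33, A32, A33]
      !![0, 0, 0;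
         B1_21f, 0, 0;
         1, 0, 0]
      !![0, 0, 0;
         σ * Real.sqrt (2*B1_21f - 2*B1_21f^2), 0, 0;
         0, 0, 0]
      !![0, 0, 0;
         -B3_22f, B3_22f, 0;
         -σ*(1 - B1_21f)/Real.sqrt (2*B1_21f - 2*B1_21f^2),
           σ/Real.sqrt (2*B1_21f - 2*B1_21f^2),
           -σ*B1_21f/Real.sqrt (2*B1_21f - 2*B1_21f^2)]
      0 := by
  have hb : 0 < 2*B1_21f - 2*B1_21f^2 := by nlinarith
  set q := Real.sqrt (2*B1_21f - 2*B1_21f^2) with hqdef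
  have hqpos : 0 < q := Real.sqrt_pos.mpr hb
  have hq2 : q^2 = 2*B1_21f - 2*B1_21f^2 := Real.sq_sqrt hb.le
  have hqne : q ≠ 0 := ne_of_gt hqpos
  have hs2 : σ^2 = 1 := by rcases hσ with h | h <;> simp [h]
  simp only [SRKOrder1Conds, dot3, Matrix.mulVec, dotProduct,
    Fin.sum_univ_three, Matrix.cons_val_zero, Matrix.cons_val_one,
    Matrix.head_cons, Matrix.cons_val_two, Matrix.tail_cons, Matrix.of_apply,
    Matrix.cons_val', Matrix.empty_val', Matrix.cons_val_fin_one,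
    Matrix.head_fin_const]
  refine ⟨by ring, by ring, by ring, ?_, by ring, by ring, ?_, ?_,
    ?_, by ring, by ring, ?_, ?_, ?_⟩
  · field_simp; ring
  · field_simp; linear_combination hs2
  · field_simp; ring
  · field_simp; ring
  · field_simp; ring_nf
  · field_simp
    linear_combination (σ*q^2) * hq2 + (σ*q^4) * hs2
  · field_simp; ring_nf
end

section
/- (Class VIII, λ=0.) For all real A_11, A_21, A_22, A_32, B3_22f and all real B2_32f ≠ 0, B3_11f ≠ 0, the 3-stage tableau with A_31 = −A_32·(1 + B2_32f·B3_11f)/(B2_32f·B3_11f), A_33 = (B2_32f·B3_11f + A_32)/(B2_32f·B3_11f), B1_21 = 0, B1_31 = 1 + B2_32f·B3_11f, B1_32 = −B2_32f·B3_11f, B2_21 = 0, B2_31 = −B2_32f, B2_32 = B2_32f, B3_11 = B3_11f, B3_21 = (1 + B2_32f·(B3_11f − B3_22f))/B2_32f, B3_22 = B3_22f, B3_31 = B3_32 = B3_33 = 0 satisfies all strong order-1.0 conditions (1)–(14) with λ = 0. -/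
open Matrix

/-- (Class VIII, λ = 0.) The Class VIII family of coefficients, with
B2_32f ≠ 0 and B3_11f ≠ 0, satisfies all strong order-1.0 conditions (1)–(14)
with λ = 0. -/
theorem srk_class_VIII (A11 A21 A22 A32 B3_22f B2_32f B3_11f : ℝ)
    (hb2 : B2_32f ≠ 0) (hb3 : B3_11f ≠ 0) :
    SRKOrder1Conds
      !![A11, 0, 0;
         A21, A22, 0;
         -A32*(1 + B2_32f*B3_11f)/(B2_32f*B3_11f), A32,
           (B2_32f*B3_11f + A32)/(B2_32f*B3_11f)]
      !![0, 0, 0;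
         0, 0, 0;
         1 + B2_32f*B3_11f, -(B2_32f*B3_11f), 0]
      !![0, 0, 0;
         0, 0, 0;
         -B2_32f, B2_32f, 0]
      !![B3_11f, 0, 0;
         (1 + B2_32f*(B3_11f - B3_22f))/B2_32f, B3_22f, 0;
         0, 0, 0]
      0 := by
  unfold SRKOrder1Conds dot3
  simp only [Matrix.mulVec, dotProduct, Fin.sum_univ_three,
    Matrix.cons_val', Matrix.cons_val_zero, Matrix.cons_val_one, Matrix.head_cons,
    Matrix.empty_val', Matrix.cons_val_fin_one, Matrix.head_fin_const,
    Matrix.cons_val_two, Matrix.tail_cons, Matrix.of_apply]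
  refine ⟨?_, by ring, by ring, by ring, by ring, by ring, ?_, ?_, ?_,
    by ring, by ring, by ring, by ring, by ring⟩
  · field_simp
    ring
  · field_simp
    ring
  · field_simp
    ring
  · field_simp
    ring
end

section
/- (Class IX, λ=0.) For all real A_11, A_22, A_32, B3_32f and all real B3_11f ≠ 0, writing c = B3_11f, the 3-stage tableau with A_21 = (c² − A_22·c² − A_11 + 1)/c², A_31 = A_32/c², A_33 = (c² − c²·A_32 − A_32)/c², B1_21 = 0, B1_31 = (c + c²·B3_32f + B3_32f)/(c·(c² + 1)), B1_32 = (c³ − c²·B3_32f − B3_32f)/(c·(c² + 1)), B2_21 = 0, B2_31 = c/(c² + 1), B2_32 = −c/(c² + 1), B3_11 = c, B3_21 = −1/c, B3_22 = 0, B3_31 = B3_32f/c², B3_32 = B3_32f, B3_33 = −(c² + 1)·B3_32f/c² satisfies all strong order-1.0 conditions (1)–(14) with λ = 0. -/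
open Matrix

/-- (Class IX, λ = 0.) The Class IX family of coefficients, with
c = B3_11f ≠ 0, satisfies all strong order-1.0 conditions (1)–(14) with λ = 0. -/
theorem srk_class_IX (A11 A22 A32 B3_32f B3_11f : ℝ) (hc : B3_11f ≠ 0) :
    SRKOrder1Conds
      !![A11, 0, 0;
         (B3_11f^2 - A22*B3_11f^2 - A11 + 1)/B3_11f^2, A22, 0;
         A32/B3_11f^2, A32, (B3_11f^2 - B3_11f^2*A32 - A32)/B3_11f^2]
      !![0, 0, 0;
         0, 0, 0;
         (B3_11f + B3_11f^2*B3_32f + B3_32f)/(B3_11f*(B3_11f^2 + 1)),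
           (B3_11f^3 - B3_11f^2*B3_32f - B3_32f)/(B3_11f*(B3_11f^2 + 1)), 0]
      !![0, 0, 0;
         0, 0, 0;
         B3_11f/(B3_11f^2 + 1), -(B3_11f/(B3_11f^2 + 1)), 0]
      !![B3_11f, 0, 0;
         -(1/B3_11f), 0, 0;
         B3_32f/B3_11f^2, B3_32f, -((B3_11f^2 + 1)*B3_32f/B3_11f^2)]
      0 := by
  unfold SRKOrder1Conds dot3
  simp only [Matrix.mulVec, dotProduct, Fin.sum_univ_three, Matrix.cons_val', Matrix.cons_val_zero, Matrix.cons_val_one, Matrix.head_cons, Matrix.empty_val', Matrix.cons_val_fin_one, Matrix.head_fin_const, Matrix.cons_val_two, Matrix.tail_cons, Matrix.of_apply]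
  have h2 : B3_11f^2 + 1 ≠ 0 := by positivity
  refine ⟨?_,?_,?_,?_,?_,?_,?_,?_,?_,?_,?_,?_,?_,?_⟩ <;> field_simp <;> ring
end

section
/- (Class X, λ=0.) For all real A_11, A_21, A_22, A_33, B3_22f and all real B2_32f ≠ 0, the 3-stage tableau with A_31 = 1 − A_33, A_32 = 0, B1_21 = 0, B1_31 = 1, B1_32 = 0, B2_21 = 0, B2_31 = −B2_32f, B2_32 = B2_32f, B3_11 = 0, B3_21 = (1 − B2_32f·B3_22f)/B2_32f, B3_22 = B3_22f, B3_31 = B3_32 = B3_33 = 0 satisfies all strong order-1.0 conditions (1)–(14) with λ = 0. -/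
open Matrix

/-- (Class X, λ = 0.) The Class X family of coefficients, with B2_32f ≠ 0,
satisfies all strong order-1.0 conditions (1)–(14) with λ = 0. -/
theorem srk_class_X (A11 A21 A22 A33 B3_22f B2_32f : ℝ) (hb : B2_32f ≠ 0) :
    SRKOrder1Conds
      !![A11, 0, 0;
         A21, A22, 0;
         1 - A33, 0, A33]
      !![0, 0, 0;
         0, 0, 0;
         1, 0, 0]
      !![0, 0, 0;
         0, 0, 0;
         -B2_32f, B2_32f, 0]
      !![0, 0, 0;
         (1 - B2_32f*B3_22f)/B2_32f, B3_22f, 0;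
         0, 0, 0]
      0 := by
  unfold SRKOrder1Conds dot3
  simp only [Matrix.mulVec, dotProduct, Fin.sum_univ_three,
    Matrix.cons_val', Matrix.cons_val_zero, Matrix.cons_val_one, Matrix.head_cons,
    Matrix.cons_val_two, Matrix.tail_cons, Matrix.head_fin_const, Matrix.of_apply,
    Matrix.empty_val', Matrix.cons_val_fin_one]
  refine ⟨by ring, by ring, by ring, by ring, by ring, by ring, ?_, by ring, by ring,
    by ring, by ring, by ring, ?_, ?_⟩ <;> field_simp <;> ring
end

section
/- (Class XI, λ=0.) For all real A_21, A_22, A_33 and all real B3_33f with B3_33f ≠ 0 and 2·(B3_33f)² ≠ 1, writing c = B3_33f and b32 = −(2c⁴ + 1)/(2c·(c² + 1)), the radicand −2c³·b32 − 2·b32·c − 2c⁴ equals 1 (in particular it is nonnegative), and the 3-stage tableau with A_11 = (2·A_21·c⁴ + A_21 + 2·A_22·c⁴ + A_22 − 2c⁴ − 2c²)/(1 − 2c²), A_32 = −(2·A_33·c⁴ − 2c⁴ − 1 + A_33)/(2c²·(c² + 1)), A_31 = 1 − A_32 − A_33, B1_21 = 0, B1_31 = 1, B1_32 = 0, B2_21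 = √(−2c³·b32 − 2·b32·c − 2c⁴)/b32, B2_31 = 0, B2_32 = 0, B3_11 = −c, B3_21 = −(b32·c + c²)/b32, B3_22 = 0, B3_31 = −b32 − c, B3_32 = b32, B3_33 = c satisfies all strong order-1.0 conditions (1)–(14) with λ = 0. -/
open Matrix

set_option maxHeartbeats 1000000 in
lemma srk_aux (A21 A22 A33 c b sq a11 a32 : ℝ)
    (hc : c ≠ 0) (hc1 : c^2 + 1 ≠ 0) (hb : b ≠ 0) (hd : 1 - 2*c^2 ≠ 0)
    (hrel : b * (2*c*(c^2 + 1)) = -(2*c^4 + 1))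
    (hs : sq = 1)
    (ha11 : a11 = (2*A21*c^4 + A21 + 2*A22*c^4 + A22 - 2*c^4 - 2*c^2)/(1 - 2*c^2))
    (ha32 : a32 = -(2*A33*c^4 - 2*c^4 - 1 + A33)/(2*c^2*(c^2 + 1))) :
    SRKOrder1Conds
      !![a11, 0, 0; A21, A22, 0; 1 - a32 - A33, a32, A33]
      !![0, 0, 0; 0, 0, 0; 1, 0, 0]
      !![0, 0, 0; sq / b, 0, 0; 0, 0, 0]
      !![-c, 0, 0; -(b*c + c^2)/b, 0, 0; -b - c, b, c] 0 := by
  subst hs ha11 ha32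
  unfold SRKOrder1Conds
  simp only [dot3, Matrix.mulVec, dotProduct, Fin.sum_univ_three,
    Matrix.cons_val', Matrix.cons_val_zero, Matrix.cons_val_one, Matrix.head_cons,
    Matrix.empty_val', Matrix.cons_val_fin_one, Matrix.head_fin_const,
    Matrix.of_apply, Matrix.cons_val_two, Matrix.tail_cons]
  refine ⟨?_, ?_, ?_, ?_, ?_, ?_, ?_, ?_, ?_, ?_, ?_, ?_, ?_, ?_⟩
  · field_simp; ring
  · norm_num
  · norm_num
  · ring
  · norm_num
  · field_simp; ring
  · field_simp
    ring
  · field_simp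
    linear_combination ((A33-1)*c^2) * hrel
  · field_simp
    ring
  · norm_num
  · norm_num
  · field_simp
    linear_combination ((1 - 2*c^2)⁻¹*2*c^3*(1 - A21 - A22) + c*(1 - A21 - A22)) * hrel - (b*(A21+A22-1)*(2*c^2+2*c^4) + b*(A21+A22) + c*(A21+A22) + 2*c^5*(A21+A22-1)) * mul_inv_cancel₀ hd
  · field_simp
    linear_combination b * hrel
  · field_simp; ring

/-- (Class XI, λ = 0.) For c = B3_33f with c ≠ 0 and 2c² ≠ 1, and
b32 = −(2c⁴ + 1)/(2c·(c² + 1)), the radicand −2c³·b32 − 2·b32·c − 2c⁴ equals 1,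
and the Class XI family of coefficients satisfies all strong order-1.0
conditions (1)–(14) with λ = 0. -/


theorem srk_class_XI (A21 A22 A33 B3_33f : ℝ) (hc : B3_33f ≠ 0)
    (hc2 : 2*B3_33f^2 ≠ 1) :
    -2*B3_33f^3 * (-(2*B3_33f^4 + 1)/(2*B3_33f*(B3_33f^2 + 1)))
      - 2*(-(2*B3_33f^4 + 1)/(2*B3_33f*(B3_33f^2 + 1)))*B3_33f
      - 2*B3_33f^4 = 1 ∧
    SRKOrder1Conds
      !![(2*A21*B3_33f^4 + A21 + 2*A22*B3_33f^4 + A22 - 2*B3_33f^4 - 2*B3_33f^2)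
           /(1 - 2*B3_33f^2), 0, 0;
         A21, A22, 0;
         1 - (-(2*A33*B3_33f^4 - 2*B3_33f^4 - 1 + A33)/(2*B3_33f^2*(B3_33f^2 + 1)))
           - A33,
           -(2*A33*B3_33f^4 - 2*B3_33f^4 - 1 + A33)/(2*B3_33f^2*(B3_33f^2 + 1)),
           A33]
      !![0, 0, 0;
         0, 0, 0;
         1, 0, 0]
      !![0, 0, 0;
         Real.sqrt (-2*B3_33f^3 * (-(2*B3_33f^4 + 1)/(2*B3_33f*(B3_33f^2 + 1)))
             - 2*(-(2*B3_33f^4 + 1)/(2*B3_33f*(B3_33f^2 + 1)))*B3_33f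
             - 2*B3_33f^4)
           / (-(2*B3_33f^4 + 1)/(2*B3_33f*(B3_33f^2 + 1))), 0, 0;
         0, 0, 0]
      !![-B3_33f, 0, 0;
         -((-(2*B3_33f^4 + 1)/(2*B3_33f*(B3_33f^2 + 1)))*B3_33f + B3_33f^2)
           / (-(2*B3_33f^4 + 1)/(2*B3_33f*(B3_33f^2 + 1))), 0, 0;
         -(-(2*B3_33f^4 + 1)/(2*B3_33f*(B3_33f^2 + 1))) - B3_33f,
           -(2*B3_33f^4 + 1)/(2*B3_33f*(B3_33f^2 + 1)), B3_33f]
      0 := by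
  set c := B3_33f with hcdef
  have hc1 : c^2 + 1 ≠ 0 := by positivity
  have hbn : (2*c^4 + 1) ≠ 0 := by positivity
  have hd : (1 - 2*c^2) ≠ 0 := fun h => hc2 (by linarith)
  have h2c : 2*c*(c^2+1) ≠ 0 := by
    intro h
    rcases mul_eq_zero.1 h with h | h
    · exact hc (by linarith)
    · exact hc1 h
  have hb : (-(2*c^4 + 1)/(2*c*(c^2 + 1))) ≠ 0 := div_ne_zero (by intro h; exact hbn (by linarith)) h2c
  have hrel : (-(2*c^4 + 1)/(2*c*(c^2 + 1))) * (2*c*(c^2 + 1)) = -(2*c^4 + 1) :=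
    div_mul_cancel₀ _ h2c
  have hrad : -2*c^3 * (-(2*c^4 + 1)/(2*c*(c^2 + 1)))
      - 2*(-(2*c^4 + 1)/(2*c*(c^2 + 1)))*c - 2*c^4 = 1 := by
    field_simp
    ring
  refine ⟨hrad, ?_⟩
  exact srk_aux A21 A22 A33 c _ _ _ _ hc hc1 hb hd hrel
    (by rw [hrad, Real.sqrt_one]) rfl rfl
end

section
/- Let a1 ∈ ℝ and define, for ĥ, k ∈ ℂ with (1 − ĥ) ≠ 0 and (1 − a1·ĥ) ≠ 0, R̂(ĥ,k) = (|1 − a1·ĥ|² + |k|²)/(|1 − ĥ|²·|1 − a1·ĥ|²). Then the following are equivalent: (i) a1 ≥ 0; (ii) for all ĥ, k ∈ ℂ with 2·Re(ĥ) + |k|² < 0 and 1 − a1·ĥ ≠ 0, one has R̂(ĥ,k) < 1. (This is the A-stability characterization of the order 0.5 SRK scheme with coefficients a2 = 0; note 2·Re(ĥ) + |k|² < 0 forces Re(ĥ) < 0, so 1 − ĥ ≠ 0 automatically.) -/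
/-- A-stability characterization of the order 0.5 stiffly accurate SRK scheme
with coefficients a2 = 0 (Lemma on order 0.5 schemes): the mean-square
stability function R̂(ĥ,k) = (|1 − a1·ĥ|² + |k|²)/(|1 − ĥ|²·|1 − a1·ĥ|²)
satisfies R̂ < 1 on the whole mean-square stability domain
{2·Re(ĥ) + |k|² < 0} of the test equation (wherever R̂ is defined) if and
only if a1 ≥ 0. -/
theorem order05_Astable_iff (a1 : ℝ) :
    0 ≤ a1 ↔
      ∀ h k : ℂ, 2 * h.re + ‖k‖^2 < 0 → 1 - (a1 : ℂ) * h ≠ 0 →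
        (‖1 - (a1 : ℂ) * h‖^2 + ‖k‖^2) / (‖1 - h‖^2 * ‖1 - (a1 : ℂ) * h‖^2) < 1 := by
  constructor
  · intro ha h k hlt _
    have hK : (0:ℝ) ≤ ‖k‖^2 := by positivity
    have hx : h.re < 0 := by linarith
    have hax : a1 * h.re ≤ 0 := mul_nonpos_of_nonneg_of_nonpos ha hx.le
    have hA : ‖1 - (a1 : ℂ) * h‖^2 = (1 - a1*h.re)^2 + (a1*h.im)^2 := by
      rw [Complex.sq_norm, Complex.normSq_apply]
      simp [Complex.sub_re, Complex.sub_im, Complex.mul_re, Complex.mul_im]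
      ring
    have hH : ‖1 - h‖^2 = (1 - h.re)^2 + h.im^2 := by
      rw [Complex.sq_norm, Complex.normSq_apply]
      simp [Complex.sub_re, Complex.sub_im]
      ring
    rw [hA, hH]
    have hA1 : (1:ℝ) ≤ (1 - a1*h.re)^2 + (a1*h.im)^2 := by
      nlinarith [sq_nonneg (a1*h.re), sq_nonneg (a1*h.im)]
    have hH1 : (1:ℝ) + ‖k‖^2 < (1 - h.re)^2 + h.im^2 := by nlinarith
    rw [div_lt_one (by nlinarith)]
    nlinarith [mul_le_mul_of_nonneg_right hA1
      (show (0:ℝ) ≤ (1 - h.re)^2 + h.im^2 - 1 by nlinarith)]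
  · intro H
    by_contra hneg
    push_neg at hneg
    set b : ℝ := -a1 with hb
    have hb0 : 0 < b := by simp [hb]; linarith
    set t : ℝ := min 1 b / 2 with ht
    have ht0 : 0 < t := by positivity
    have ht1 : t ≤ 1/2 := by
      have := min_le_left 1 b; simp [ht]; linarith
    have htb : t ≤ b/2 := by
      have := min_le_right 1 b; simp [ht]; linarith
    set s : ℝ := 1 - t with hs
    have hs0 : 0 < s := by simp [hs]; linarith
    have hs1 : s < 1 := by simp [hs]; linarith
    set c : ℝ := s / b with hc
    have hc0 : 0 < c := by positivity
    have hcb : c ≤ 1 / b := by rw [hc]; gcongr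
    have h2 : t * c ≤ 1/2 := by
      have e1 : t * c ≤ t * (1/b) := by
        apply mul_le_mul_of_nonneg_left hcb ht0.le
      have e2 : t * (1/b) ≤ 1/2 := by
        rw [mul_one_div, div_le_iff₀ hb0]; linarith
      linarith
    have ht2 : t^2 ≤ 1/4 := by nlinarith
    have h1 : t^2 * c ≤ 1/4 := by nlinarith
    have hkey : t^2 * (2*c + c^2) < 2*c := by
      nlinarith [mul_le_mul_of_nonneg_right ht2 hc0.le,
        mul_le_mul_of_nonneg_right h1 hc0.le]
    set K : ℝ := (t^2 * (2*c + c^2) + 2*c) / 2 with hKdef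
    have hK0 : 0 ≤ K := by positivity
    have hKlt : K < 2*c := by rw [hKdef]; linarith
    have hKgt : t^2 * (2*c + c^2) < K := by rw [hKdef]; linarith
    set h : ℂ := ((-c : ℝ) : ℂ) with hh
    set k : ℂ := ((Real.sqrt K : ℝ) : ℂ) with hk
    have hnorm_k : ‖k‖^2 = K := by
      rw [hk, Complex.norm_real, Real.norm_eq_abs, abs_of_nonneg (Real.sqrt_nonneg _),
        Real.sq_sqrt hK0]
    have hre : h.re = -c := by simp [hh]
    have hac : a1 * c = -s := by
      rw [hc, show a1 = -b from by rw [hb]; ring]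
      field_simp
    have hreal : 1 + a1 * c = t := by rw [hac, hs]; ring
    have hAeq : 1 - (a1 : ℂ) * h = ((t : ℝ) : ℂ) := by
      rw [hh]
      have e : (1:ℂ) - (a1:ℂ) * ((-c : ℝ) : ℂ) = ((1 + a1*c : ℝ) : ℂ) := by
        push_cast; ring
      rw [e, hreal]
    have hAne : 1 - (a1 : ℂ) * h ≠ 0 := by
      rw [hAeq]
      exact Complex.ofReal_ne_zero.mpr ht0.ne'
    have hdom : 2 * h.re + ‖k‖^2 < 0 := by
      rw [hre, hnorm_k]; linarith
    have hfin := H h k hdom hAne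
    have hnA : ‖1 - (a1 : ℂ) * h‖^2 = t^2 := by
      rw [hAeq, Complex.norm_real, Real.norm_eq_abs, sq_abs]
    have hnH : ‖1 - h‖^2 = (1 + c)^2 := by
      rw [hh]
      have e : (1 : ℂ) - ((-c : ℝ) : ℂ) = ((1 + c : ℝ) : ℂ) := by push_cast; ring
      rw [e, Complex.norm_real, Real.norm_eq_abs, sq_abs]
    rw [hnA, hnH, hnorm_k, div_lt_one (by positivity)] at hfin
    have e2 : (1+c)^2 * t^2 = t^2 + t^2*(2*c+c^2) := by ring
    linarith
end

section
/- Let a1, a2 ∈ ℝ satisfy a1 ≥ 0, 2·a2·(1 + a1) ≤ 1 + 4·a1, 2·a2·(1 − a1) ≤ 1, and a2 ≤ 1 (equivalently, a2 ≤ min{(1+4a1)/(2(1+a1)), 1/(2(1−a1)), 1}). Define, for ĥ, k ∈ ℂ with (1 − (1−a2)·ĥ) ≠ 0 and (1 − a1·ĥ) ≠ 0, R̂(ĥ,k) = (|1 + (a2 − a1)·ĥ|² + |k|²)/(|1 − (1−a2)·ĥ|²·|1 − a1·ĥ|²). Then for all ĥ, k ∈ ℂ with 2·Re(ĥ) + |k|²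 < 0, 1 − (1−a2)·ĥ ≠ 0 and 1 − a1·ĥ ≠ 0, one has R̂(ĥ,k) < 1; that is, the order 0.5 SRK scheme is A-stable. -/
/-- A-stability of the order 0.5 stiffly accurate SRK scheme with coefficients
a1 ≥ 0 and a2 ≤ min{(1+4a1)/(2(1+a1)), 1/(2(1−a1)), 1}: the mean-square
stability function
R̂(ĥ,k) = (|1 + (a2 − a1)·ĥ|² + |k|²)/(|1 − (1−a2)·ĥ|²·|1 − a1·ĥ|²)
is < 1 on the whole mean-square stability domain {2·Re(ĥ) + |k|² < 0} of the
test equation, wherever it is defined. -/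
theorem order05_Astable_general (a1 a2 : ℝ)
    (ha1 : 0 ≤ a1)
    (ha2a : 2 * a2 * (1 + a1) ≤ 1 + 4 * a1)
    (ha2b : 2 * a2 * (1 - a1) ≤ 1)
    (ha2c : a2 ≤ 1) :
    ∀ h k : ℂ, 2 * h.re + ‖k‖^2 < 0 →
      1 - ((1 : ℂ) - (a2 : ℂ)) * h ≠ 0 → 1 - (a1 : ℂ) * h ≠ 0 →
      (‖1 + ((a2 : ℂ) - (a1 : ℂ)) * h‖^2 + ‖k‖^2)
        / (‖1 - ((1 : ℂ) - (a2 : ℂ)) * h‖^2 * ‖1 - (a1 : ℂ) * h‖^2) < 1 := by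
  intro h k hdom hne1 hne2
  set x := h.re with hx
  set y := h.im with hy
  have hK : (0:ℝ) ≤ ‖k‖^2 := by positivity
  have hxneg : x < 0 := by nlinarith
  have hD1 : (0:ℝ) < ‖1 - ((1 : ℂ) - (a2 : ℂ)) * h‖^2 := by
    have := norm_pos_iff.mpr hne1; positivity
  have hD2 : (0:ℝ) < ‖1 - (a1 : ℂ) * h‖^2 := by
    have := norm_pos_iff.mpr hne2; positivity
  rw [div_lt_one (by positivity)]
  have e1 : ‖1 + ((a2 : ℂ) - (a1 : ℂ)) * h‖^2
      = (1 + (a2 - a1) * x)^2 + ((a2 - a1) * y)^2 := by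
    rw [Complex.sq_norm, Complex.normSq_apply]
    simp [Complex.add_re, Complex.mul_re, Complex.add_im, Complex.mul_im]
    ring
  have e2 : ‖1 - ((1 : ℂ) - (a2 : ℂ)) * h‖^2
      = (1 - (1 - a2) * x)^2 + ((1 - a2) * y)^2 := by
    rw [Complex.sq_norm, Complex.normSq_apply]
    simp [Complex.sub_re, Complex.mul_re, Complex.sub_im, Complex.mul_im]
    ring
  have e3 : ‖1 - (a1 : ℂ) * h‖^2 = (1 - a1 * x)^2 + (a1 * y)^2 := by
    rw [Complex.sq_norm, Complex.normSq_apply]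
    simp [Complex.sub_re, Complex.mul_re, Complex.sub_im, Complex.mul_im]
    ring
  rw [e1, e2, e3]
  have h2 : (0:ℝ) ≤ 1 - a2 := by linarith
  have h1' : (0:ℝ) ≤ 1 - 2*a2*(1-a1) := by linarith
  have h5 : (0:ℝ) ≤ 1 + a1 - a2 := by linarith
  have hs : (0:ℝ) ≤ x^2 + y^2 := by positivity
  have t1 : (0:ℝ) ≤ (1 - 2*a2*(1-a1)) * (x^2+y^2) := mul_nonneg h1' hs
  have t2 : (0:ℝ) ≤ 4*a1*(1-a2) * x^2 := by positivity
  have t3 : (0:ℝ) ≤ (-x) * (2*a1*(1-a2)*(1+a1-a2) * (x^2+y^2)) := by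
    apply mul_nonneg (by linarith)
    apply mul_nonneg _ hs
    positivity
  have t4 : (0:ℝ) ≤ a1^2*(1-a2)^2*(x^2+y^2)^2 := by positivity
  nlinarith [t1, t2, t3, t4, hdom, hK]
end

section
/- Let a ∈ ℝ and define, for ĥ, k ∈ ℂ with (a·ĥ − 1) ≠ 0 and (ĥ − 1) ≠ 0, R̂(ĥ,k) = (|a·ĥ − 1|⁴ + (1/2)·|k|⁴ + |k|²·|a·ĥ − 1|²)/(|a·ĥ − 1|⁴·|ĥ − 1|²). Then the following are equivalent: (i) a ≥ 1/4; (ii) for all ĥ, k ∈ ℂ with 2·Re(ĥ) + |k|² < 0 and a·ĥ ≠ 1, one has R̂(ĥ,k) < 1. (This is the A-stability characterization of the class II strong order 1.0 SRK family with a1 = a2 = a and a3 = 1; note Re(ĥ) < 0 forces ĥ ≠ 1.) -/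
private lemma normsq_eq (z : ℂ) : ‖z‖^2 = z.re^2 + z.im^2 := by
  rw [Complex.sq_norm, Complex.normSq_apply]; ring

private lemma srk_key (a u y : ℝ) (ha : 1/4 ≤ a) (hu : 0 ≤ u) :
    2*u^2 + 2*u*((a*u+1)^2 + (a*y)^2) ≤
      ((a*u+1)^2 + (a*y)^2)^2 * (u^2 + y^2 + 2*u) := by
  obtain ⟨A, hAdef⟩ : ∃ A : ℝ, A = (a*u+1)^2 + (a*y)^2 := ⟨_, rfl⟩
  obtain ⟨A0, hA0def⟩ : ∃ A0 : ℝ, A0 = (u/4+1)^2 := ⟨_, rfl⟩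
  rw [← hAdef]
  have hau : 0 ≤ (a-1/4)*u := mul_nonneg (by linarith) hu
  have h1 : A0 ≤ A := by
    have h0 : (u/4+1)^2 ≤ (a*u+1)^2 := by
      nlinarith [sq_nonneg ((a-1/4)*u), mul_nonneg hau hu, hau]
    rw [hAdef, hA0def]; nlinarith [sq_nonneg (a*y)]
  have h2 : (1:ℝ) ≤ A0 := by rw [hA0def]; nlinarith
  have h3 : 2*u*A0 + 2*u^2 ≤ A0^2*(u^2+2*u) := by
    have key : 0 ≤ u^3*(u^3+18*u^2+128*u+416)/256 := by positivity
    have hid : A0^2*(u^2+2*u) - (2*u*A0+2*u^2)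
        = u^3*(u^3+18*u^2+128*u+416)/256 := by rw [hA0def]; ring
    linarith
  have h4 : 0 ≤ (A - A0) * ((u^2+y^2+2*u)*(A+A0) - 2*u) := by
    have hS : 0 ≤ u^2+y^2+2*u := by positivity
    have h5 : 0 ≤ (u^2+y^2+2*u)*(A+A0) - 2*u := by
      nlinarith [mul_nonneg hS (show (0:ℝ) ≤ A+A0-2 by linarith), sq_nonneg y]
    exact mul_nonneg (by linarith) h5
  nlinarith [h3, h4, mul_nonneg (sq_nonneg A0) (sq_nonneg y)]

private lemma srk_master (d e : ℝ) (hd : 0 ≤ d) (he : 0 ≤ e) (he1 : e ≤ 1) :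
    d*e - 3*e^2*(1+d^2)^2 ≤ 2*e + 2*(1+((1-d)/4)*e)^2 - (1+((1-d)/4)*e)^4*(e+2) := by
  have f3 : 0 ≤ e^2 - e^3 := by nlinarith
  have f4 : 0 ≤ e^2 - e^4 := by nlinarith
  have f5 : 0 ≤ e^2 - e^5 := by nlinarith
  have d2 : 0 ≤ d^2 := sq_nonneg d
  have d4 : 0 ≤ d^4 := by positivity
  nlinarith [f3, f4, f5, mul_nonneg d2 f3, mul_nonneg d2 f4, mul_nonneg d2 f5,
    mul_nonneg d4 f4, mul_nonneg d4 f5,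
    mul_nonneg hd (pow_nonneg he 2), mul_nonneg hd (pow_nonneg he 3),
    mul_nonneg hd (pow_nonneg he 4), mul_nonneg hd (pow_nonneg he 5),
    mul_nonneg (mul_nonneg d2 hd) (pow_nonneg he 3),
    mul_nonneg (mul_nonneg d2 hd) (pow_nonneg he 4),
    mul_nonneg (mul_nonneg d2 hd) (pow_nonneg he 5),
    mul_nonneg d2 (pow_nonneg he 2), mul_nonneg d4 (pow_nonneg he 2)]

private lemma srk_counter (a : ℝ) (ha : a < 1/4) :
    ∃ e t : ℝ, 0 < e ∧ 0 ≤ t ∧ t < 2*e ∧ 0 < 1 + a*e ∧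
      (1+a*e)^4*(1+e)^2 ≤ (1+a*e)^4 + t^2/2 + t*(1+a*e)^2 := by
  obtain ⟨d, hddef⟩ : ∃ d : ℝ, d = 1 - 4*a := ⟨_, rfl⟩
  have hd : 0 < d := by rw [hddef]; linarith
  have ha2 : a = (1-d)/4 := by rw [hddef]; ring
  obtain ⟨E, hEdef⟩ : ∃ E : ℝ, E = 6*(1+d^2)^2 := ⟨_, rfl⟩
  have hE : 0 < E := by rw [hEdef]; positivity
  obtain ⟨e, hedef⟩ : ∃ e : ℝ, e = d / E := ⟨_, rfl⟩
  have he : 0 < e := by rw [hedef]; exact div_pos hd hE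
  have heE : e * E = d := by rw [hedef]; exact div_mul_cancel₀ d (ne_of_gt hE)
  have he1 : e ≤ 1 := by
    rw [hedef, div_le_one hE, hEdef]
    nlinarith [sq_nonneg (d-1), sq_nonneg d, sq_nonneg (d^2-1)]
  obtain ⟨q, hqdef⟩ : ∃ q : ℝ, q = 2*e + 2*(1+a*e)^2 - (1+a*e)^4*(e+2) := ⟨_, rfl⟩
  have hq1 : d*e - 3*e^2*(1+d^2)^2 ≤ q := by
    have hm := srk_master d e hd.le he.le he1
    rw [← ha2] at hm
    rw [hqdef]; linarith
  have h3e : 3*e^2*(1+d^2)^2 = d*e/2 := by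
    have h1 : 3*e^2*(1+d^2)^2 = e*(e*E)/2 := by rw [hEdef]; ring
    rw [h1, heE]; ring
  have hq : d*e/2 ≤ q := by linarith
  have hqpos : 0 < q := lt_of_lt_of_le (by positivity) hq
  have h1ae : 0 < 1 + a*e := by
    have key : (1+a*e)*E = 6*(1+d^2)^2 + (1-d)/4*d := by
      have h1 : (1+a*e)*E = E + a*(e*E) := by ring
      rw [h1, heE, hEdef, ha2]
    nlinarith [hE, sq_nonneg d, sq_nonneg (d-1), sq_nonneg (d^2)]
  obtain ⟨c, hcdef⟩ : ∃ c : ℝ, c = 2*e + (1+a*e)^2 := ⟨_, rfl⟩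
  have hden : 0 < c := by rw [hcdef]; positivity
  obtain ⟨m, hmdef⟩ : ∃ m : ℝ, m = e*q := ⟨_, rfl⟩
  have hmpos : 0 < m := by rw [hmdef]; exact mul_pos he hqpos
  obtain ⟨δ, hδdef⟩ : ∃ δ : ℝ, δ = m / c := ⟨_, rfl⟩
  have hδpos : 0 < δ := by rw [hδdef]; exact div_pos hmpos hden
  have hδle : δ ≤ 2*e := by
    rw [hδdef, div_le_iff₀ hden, hmdef, hqdef, hcdef]
    nlinarith [mul_nonneg (pow_nonneg (le_of_lt h1ae) 4) (by linarith : (0:ℝ) ≤ e+2),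
      mul_nonneg he.le (mul_nonneg (pow_nonneg (le_of_lt h1ae) 4) (by linarith : (0:ℝ) ≤ e+2)),
      sq_nonneg (1+a*e), mul_nonneg he.le he.le]
  have hδmul : δ * c = m := by rw [hδdef]; exact div_mul_cancel₀ m (ne_of_gt hden)
  refine ⟨e, 2*e - δ, he, by linarith, by linarith, h1ae, ?_⟩
  have h2 : δ*(2*e+(1+a*e)^2) = e*q := by rw [← hcdef, hδmul, hmdef]
  have hid : ((1+a*e)^4 + (2*e-δ)^2/2 + (2*e-δ)*(1+a*e)^2) - (1+a*e)^4*(1+e)^2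
      = δ^2/2 := by linear_combination -h2 - e*hqdef
  nlinarith [sq_nonneg δ, hid]

/-- A-stability characterization of the class II strong order 1.0 SRK family
with a1 = a2 = a and a3 = 1: the mean-square stability function
R̂(ĥ,k) = (|a·ĥ − 1|⁴ + (1/2)·|k|⁴ + |k|²·|a·ĥ − 1|²)/(|a·ĥ − 1|⁴·|ĥ − 1|²)
satisfies R̂ < 1 on the whole mean-square stability domain
{2·Re(ĥ) + |k|² < 0} of the test equation (wherever a·ĥ ≠ 1) if and only if
a ≥ 1/4. -/
theorem order10_classII_diag_Astable_iff (a : ℝ) :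
    1/4 ≤ a ↔
      ∀ h k : ℂ, 2 * h.re + ‖k‖^2 < 0 → (a : ℂ) * h ≠ 1 →
        (‖(a : ℂ) * h - 1‖^4 + (1/2) * ‖k‖^4 + ‖k‖^2 * ‖(a : ℂ) * h - 1‖^2)
          / (‖(a : ℂ) * h - 1‖^4 * ‖h - 1‖^2) < 1 := by
  constructor
  · intro ha h k hdom hne
    obtain ⟨x, hx⟩ : ∃ x : ℝ, x = h.re := ⟨_, rfl⟩
    obtain ⟨y, hy⟩ : ∃ y : ℝ, y = h.im := ⟨_, rfl⟩
    obtain ⟨t, htdef⟩ : ∃ t : ℝ, t = ‖k‖^2 := ⟨_, rfl⟩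
    rw [← htdef, ← hx] at hdom
    have ht0 : 0 ≤ t := htdef ▸ pow_nonneg (norm_nonneg k) 2
    have hxneg : x < 0 := by linarith
    have e1 : ‖(a:ℂ)*h - 1‖^2 = (a*x-1)^2 + (a*y)^2 := by
      rw [normsq_eq, hx, hy]; simp [Complex.mul_re, Complex.mul_im]
    have e2 : ‖h - 1‖^2 = (x-1)^2 + y^2 := by
      rw [normsq_eq, hx, hy]; simp
    have e14 : ‖(a:ℂ)*h - 1‖^4 = ((a*x-1)^2 + (a*y)^2)^2 := by
      have h4 : ‖(a:ℂ)*h - 1‖^4 = (‖(a:ℂ)*h - 1‖^2)^2 := by ring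
      rw [h4, e1]
    have e4 : ‖k‖^4 = t^2 := by
      have h4 : ‖k‖^4 = (‖k‖^2)^2 := by ring
      rw [h4, ← htdef]
    have hApos : 0 < (a*x-1)^2 + (a*y)^2 := by
      rw [← e1]
      have hz : (a:ℂ)*h - 1 ≠ 0 := sub_ne_zero.mpr hne
      exact pow_pos (norm_pos_iff.mpr hz) 2
    have hD : 0 < ‖(a:ℂ)*h - 1‖^4 * ‖h - 1‖^2 := by
      rw [e14, e2]
      have hx1 : 0 < -(x-1) := by linarith
      have hB : 0 < (x-1)^2 + y^2 := by nlinarith [sq_nonneg y, mul_pos hx1 hx1]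
      exact mul_pos (pow_pos hApos 2) hB
    rw [div_lt_one hD, e14, e2, e1, e4, ← htdef]
    have hkey := srk_key a (-x) y ha (by linarith)
    have hlt : t < -(2*x) := by linarith
    have hprod1 : t*t ≤ t*(-(2*x)) := mul_le_mul_of_nonneg_left hlt.le ht0
    have hprod2 : t*((a*x-1)^2 + (a*y)^2) < (-(2*x))*((a*x-1)^2 + (a*y)^2) :=
      mul_lt_mul_of_pos_right hlt hApos
    nlinarith [hkey, hprod1, hprod2,
      mul_le_mul_of_nonneg_left hlt.le (by linarith : (0:ℝ) ≤ -(2*x))]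
  · intro H
    by_contra hc
    push_neg at hc
    obtain ⟨e, t, he, ht0, htlt, h1ae, hfail⟩ := srk_counter a hc
    have hne : (a:ℂ) * ((-e : ℝ):ℂ) ≠ 1 := by
      intro hcon
      push_cast at hcon
      have h2 : ((a*e : ℝ):ℂ) = ((-1:ℝ):ℂ) := by push_cast; linear_combination -hcon
      have h3 := Complex.ofReal_injective h2
      linarith
    have n3 : ‖((Real.sqrt t : ℝ):ℂ)‖^2 = t := by
      rw [normsq_eq]; simp [Real.mul_self_sqrt ht0, sq]
    have hdom : 2 * (((-e : ℝ)):ℂ).re + ‖((Real.sqrt t : ℝ):ℂ)‖^2 < 0 := by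
      rw [n3]; simp only [Complex.ofReal_re]; linarith
    have Hspec := H ((-e : ℝ):ℂ) ((Real.sqrt t : ℝ):ℂ) hdom hne
    have n1 : ‖(a:ℂ)*((-e : ℝ):ℂ) - 1‖^2 = (1+a*e)^2 := by
      rw [normsq_eq]; simp [Complex.mul_re, Complex.mul_im]; ring
    have n1' : ‖(a:ℂ)*((-e : ℝ):ℂ) - 1‖^4 = (1+a*e)^4 := by
      have h4 : ‖(a:ℂ)*((-e : ℝ):ℂ) - 1‖^4 = (‖(a:ℂ)*((-e : ℝ):ℂ) - 1‖^2)^2 := by ring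
      rw [h4, n1]; ring
    have n2 : ‖((-e : ℝ):ℂ) - 1‖^2 = (1+e)^2 := by
      rw [normsq_eq]; simp; ring
    have n4 : ‖((Real.sqrt t : ℝ):ℂ)‖^4 = t^2 := by
      have h4 : ‖((Real.sqrt t : ℝ):ℂ)‖^4 = (‖((Real.sqrt t : ℝ):ℂ)‖^2)^2 := by ring
      rw [h4, n3]
    rw [n1', n1, n2, n3, n4] at Hspec
    have hDpos : 0 < (1+a*e)^4*(1+e)^2 :=
      mul_pos (pow_pos h1ae 4) (pow_pos (by linarith : (0:ℝ) < 1+e) 2)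
    rw [div_lt_one hDpos] at Hspec
    linarith
end

section
/- Let a2, a3 ∈ ℝ with a2 ≥ 0 and a3 ≥ 3/2. For ĥ, k ∈ ℂ with a2·ĥ ≠ 1 and a3·ĥ ≠ 1, define R̂(ĥ,k) = [ (1/2)·|k|⁴ + |a2·ĥ − 1|²·( |k|² + |ĥ|²·(1 − a3)² + 2·Re(ĥ)·(1 − a3) + 1 ) ] / ( |a2·ĥ − 1|²·|a3·ĥ − 1|² ). Then for all ĥ, k ∈ ℂ with 2·Re(ĥ) + |k|² < 0, a2·ĥ ≠ 1 and a3·ĥ ≠ 1, one has R̂(ĥ,k) < 1; that is, the class II order 1.0 SRK family with a1 = 0 is A-stable. -/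
/-- A-stability of the class II strong order 1.0 SRK family with an explicit
first stage (a1 = 0): for a2 ≥ 0 and a3 ≥ 3/2, the mean-square stability
function
R̂(ĥ,k) = [(1/2)|k|⁴ + |a2·ĥ − 1|²·(|k|² + |ĥ|²(1 − a3)² + 2·Re(ĥ)(1 − a3) + 1)]
          / (|a2·ĥ − 1|²·|a3·ĥ − 1|²)
is < 1 on the whole mean-square stability domain {2·Re(ĥ) + |k|² < 0} of the
test equation, wherever it is defined. -/
theorem order10_classII_explicit_Astable (a2 a3 : ℝ)
    (ha2 : 0 ≤ a2) (ha3 : 3/2 ≤ a3) :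
    ∀ h k : ℂ, 2 * h.re + ‖k‖^2 < 0 →
      (a2 : ℂ) * h ≠ 1 → (a3 : ℂ) * h ≠ 1 →
      ((1/2) * ‖k‖^4
        + ‖(a2 : ℂ) * h - 1‖^2
          * (‖k‖^2 + ‖h‖^2 * (1 - a3)^2 + 2 * h.re * (1 - a3) + 1))
        / (‖(a2 : ℂ) * h - 1‖^2 * ‖(a3 : ℂ) * h - 1‖^2) < 1 := by
  intro h k hd hne2 hne3
  set x := h.re with hx
  set y := h.im with hy
  have hK : (0:ℝ) ≤ ‖k‖^2 := sq_nonneg _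
  set K := ‖k‖^2 with hKdef
  have hK4 : ‖k‖^4 = K^2 := by rw [hKdef]; ring
  have hA : ‖(a2 : ℂ) * h - 1‖^2 = (a2*x-1)^2 + (a2*y)^2 := by
    rw [Complex.sq_norm]
    simp [Complex.normSq_apply, Complex.sub_re, Complex.sub_im, Complex.mul_re,
      Complex.mul_im, Complex.ofReal_re, Complex.ofReal_im]
    ring
  have hB : ‖(a3 : ℂ) * h - 1‖^2 = (a3*x-1)^2 + (a3*y)^2 := by
    rw [Complex.sq_norm]
    simp [Complex.normSq_apply, Complex.sub_re, Complex.sub_im, Complex.mul_re,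
      Complex.mul_im, Complex.ofReal_re, Complex.ofReal_im]
    ring
  have hH : ‖h‖^2 = x^2 + y^2 := by
    rw [Complex.sq_norm]
    simp [Complex.normSq_apply]
    ring
  have hBpos : (0:ℝ) < (a3*x-1)^2 + (a3*y)^2 := by
    rw [← hB]
    exact pow_pos (norm_pos_iff.mpr (sub_ne_zero.mpr hne3)) 2
  have hxneg : x < 0 := by nlinarith
  have hA1 : (1:ℝ) ≤ (a2*x-1)^2 + (a2*y)^2 := by nlinarith [sq_nonneg (a2*y), mul_nonneg ha2 (neg_nonneg.mpr hxneg.le)]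
  rw [hA, hB, hH, hK4]
  rw [div_lt_one (by positivity)]
  have hKlt : K < -2*x := by linarith
  nlinarith [sq_nonneg y, sq_nonneg (a2*y), sq_nonneg (a3*y), mul_pos (neg_pos.mpr hxneg) (neg_pos.mpr hxneg),
    mul_le_mul_of_nonneg_left hKlt.le (by linarith : (0:ℝ) ≤ (a2*x-1)^2 + (a2*y)^2),
    mul_lt_mul_of_pos_right hKlt (show (0:ℝ) < -2*x + K + (-2*x) from by linarith),
    sq_nonneg (x+y), sq_nonneg (x-y), mul_le_mul hA1 (le_refl ((x^2+y^2)*(2*a3-1))) (by nlinarith) (by positivity)]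
end

section
/- Let a2, a3 ∈ ℝ with a2 ≥ 0 and a3 ≥ 3/2. For ĥ, k ∈ ℂ with a2·ĥ ≠ 1 and a3·ĥ ≠ 1, define R̂(ĥ,k) = [ (1/2)·|k|⁴ + |1 − a2·ĥ|²·( |k|² + |ĥ|²·(1 − 2·a3) + 2·Re(ĥ) + |1 − a3·ĥ|² ) ] / ( |a2·ĥ − 1|²·|a3·ĥ − 1|² ). Then for all ĥ, k ∈ ℂ with 2·Re(ĥ) + |k|² < 0, a2·ĥ ≠ 1 and a3·ĥ ≠ 1, one has R̂(ĥ,k) < 1; that is, the class X order 1.0 SRK family with a1 = 0 and a4 = −a2 is A-stable. -/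
lemma srk_key_ineq (a2 a3 x y K : ℝ) (ha2 : 0 ≤ a2) (ha3 : 3/2 ≤ a3)
    (hKnn : 0 ≤ K) (hdom : 2*x + K < 0)
    (hQpos : 0 < (1 - a3*x)^2 + (a3*y)^2) :
    ((1/2)*K^2 + ((1 - a2*x)^2 + (a2*y)^2)
        * (K + (x^2+y^2)*(1-2*a3) + 2*x + ((1 - a3*x)^2 + (a3*y)^2)))
      / (((1 - a2*x)^2 + (a2*y)^2) * ((1 - a3*x)^2 + (a3*y)^2)) < 1 := by
  have hKlt : K < -(2*x) := by linarith
  have hxneg : x < 0 := by nlinarith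
  have hma2x : 0 ≤ a2 * (-x) := mul_nonneg ha2 (by linarith)
  have hP1 : (1:ℝ) ≤ (1 - a2*x)^2 + (a2*y)^2 := by
    nlinarith [sq_nonneg (a2*y), sq_nonneg (a2*x)]
  have hPpos : (0:ℝ) < (1 - a2*x)^2 + (a2*y)^2 := by linarith
  rw [div_lt_one (by positivity)]
  have hA : (1/2)*K^2 < 2*x^2 := by nlinarith [hKlt, hKnn, hxneg]
  have hB : ((1 - a2*x)^2 + (a2*y)^2)*(K + 2*x) < 0 :=
    mul_neg_of_pos_of_neg hPpos (by linarith)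
  have h1 : 2*x^2 ≤ (x^2+y^2)*(2*a3-1) := by nlinarith [sq_nonneg y, sq_nonneg x]
  have hmm : 1*(2*x^2) ≤ ((1 - a2*x)^2 + (a2*y)^2)*((x^2+y^2)*(2*a3-1)) :=
    mul_le_mul hP1 h1 (by positivity) (by linarith)
  nlinarith [hA, hB, hmm]

/-- A-stability of the class X strong order 1.0 SRK family with an explicit
first stage (a1 = 0) and a4 = −a2: for a2 ≥ 0 and a3 ≥ 3/2, the mean-square
stability function
R̂(ĥ,k) = [(1/2)|k|⁴ + |1 − a2·ĥ|²·(|k|² + |ĥ|²(1 − 2a3) + 2·Re(ĥ) + |1 − a3·ĥ|²)]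
          / (|a2·ĥ − 1|²·|a3·ĥ − 1|²)
is < 1 on the whole mean-square stability domain {2·Re(ĥ) + |k|² < 0} of the
test equation, wherever it is defined. -/
theorem order10_classX_explicit_Astable (a2 a3 : ℝ)
    (ha2 : 0 ≤ a2) (ha3 : 3/2 ≤ a3) :
    ∀ h k : ℂ, 2 * h.re + ‖k‖^2 < 0 →
      (a2 : ℂ) * h ≠ 1 → (a3 : ℂ) * h ≠ 1 →
      ((1/2) * ‖k‖^4
        + ‖1 - (a2 : ℂ) * h‖^2
          * (‖k‖^2 + ‖h‖^2 * (1 - 2*a3) + 2 * h.re + ‖1 - (a3 : ℂ) * h‖^2))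
        / (‖(a2 : ℂ) * h - 1‖^2 * ‖(a3 : ℂ) * h - 1‖^2) < 1 := by
  intro h k hdom h2 h3
  have e1 : ‖1 - (a2 : ℂ) * h‖^2 = (1 - a2*h.re)^2 + (a2*h.im)^2 := by
    simp [Complex.sq_norm, Complex.normSq_apply]
    ring
  have e2 : ‖1 - (a3 : ℂ) * h‖^2 = (1 - a3*h.re)^2 + (a3*h.im)^2 := by
    simp [Complex.sq_norm, Complex.normSq_apply]
    ring
  have e3 : ‖(a2 : ℂ) * h - 1‖^2 = (1 - a2*h.re)^2 + (a2*h.im)^2 := by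
    simp [Complex.sq_norm, Complex.normSq_apply]
    ring
  have e4 : ‖(a3 : ℂ) * h - 1‖^2 = (1 - a3*h.re)^2 + (a3*h.im)^2 := by
    simp [Complex.sq_norm, Complex.normSq_apply]
    ring
  have e5 : ‖h‖^2 = h.re^2 + h.im^2 := by
    simp [Complex.sq_norm, Complex.normSq_apply]
    ring
  have e6 : ‖k‖^4 = (‖k‖^2)^2 := by ring
  have hQpos : (0:ℝ) < (1 - a3*h.re)^2 + (a3*h.im)^2 := by
    have hne : (a3 : ℂ) * h - 1 ≠ 0 := sub_ne_zero.mpr h3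
    have : (0:ℝ) < ‖(a3 : ℂ) * h - 1‖^2 :=
      pow_pos (norm_pos_iff.mpr hne) 2
    rwa [e4] at this
  rw [e1, e2, e3, e4, e5, e6]
  exact srk_key_ineq a2 a3 h.re h.im (‖k‖^2) ha2 ha3 (by positivity) hdom hQpos
end
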